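/- Fix integers r ≥ 2, n ≥ 1, N ≥ rn+1 and an r-coloring of the edges of the complete bipartite graph K_{N,N} with parts X and Y that contains no monochromatic copy of S_{n,n}. For i ∈ {1,...,r} let z_i be the number of vertices of X ∪ Y that receive exactly i colors, and let e* be the number of important edges. Then n · ∑_{i=2}^{r} z_i ≤ 2(r-1)nN - 2N² + e*. -/

import Mathlib

/-- A monochromatic copy of the double star `S_{k,l}` in an `r`-coloring `c` of the
edges of the complete bipartite graph `K_{N,N}` with parts `X = Fin N` (first argument
of `c`) and `Y = Fin N` (second argument). -/
def BipHasMonoDoubleStar (N r k l : ℕ) (c : Fin N → Fin N → Fin r) : Prop :=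
  ∃ (u v : Fin N) (a : Fin k → Fin N) (b : Fin l → Fin N) (col : Fin r),
    Function.Injective a ∧ Function.Injective b ∧
    (∀ i, a i ≠ v) ∧ (∀ j, b j ≠ u) ∧
    c u v = col ∧ (∀ i, c u (a i) = col) ∧ (∀ j, c (b j) v = col)

/-- The number of edges of color `i` incident to the vertex `x ∈ X`. -/
def dX (N r : ℕ) (c : Fin N → Fin N → Fin r) (i : Fin r) (x : Fin N) : ℕ :=
  (Finset.univ.filter (fun y => c x y = i)).card

/-- The number of edges of color `i` incident to the vertex `y ∈ Y`. -/
def dY (N r : ℕ) (c : Fin N → Fin N → Fin r) (i : Fin r) (y : Fin N) : ℕ :=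
  (Finset.univ.filter (fun x => c x y = i)).card

/-- `x_i`: the number of vertices of `X` whose unique received color is `i`
(a vertex receives color `j` if it is incident to at least `n+1` edges of color `j`). -/
def xcount (n N r : ℕ) (c : Fin N → Fin N → Fin r) (i : Fin r) : ℕ :=
  (Finset.univ.filter (fun x : Fin N =>
    n + 1 ≤ dX N r c i x ∧ ∀ j : Fin r, n + 1 ≤ dX N r c j x → j = i)).card

/-- `y_i`: the number of vertices of `Y` whose unique received color is `i`. -/
def ycount (n N r : ℕ) (c : Fin N → Fin N → Fin r) (i : Fin r) : ℕ :=
  (Finset.univ.filter (fun y : Fin N =>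
    n + 1 ≤ dY N r c i y ∧ ∀ j : Fin r, n + 1 ≤ dY N r c j y → j = i)).card

/-- `z_i`: the number of vertices of `X ∪ Y` receiving exactly `i` colors. -/
def zcount (n N r : ℕ) (c : Fin N → Fin N → Fin r) (i : ℕ) : ℕ :=
  (Finset.univ.filter (fun x : Fin N =>
    (Finset.univ.filter (fun j : Fin r => n + 1 ≤ dX N r c j x)).card = i)).card +
  (Finset.univ.filter (fun y : Fin N =>
    (Finset.univ.filter (fun j : Fin r => n + 1 ≤ dY N r c j y)).card = i)).card

/-- `e*`: the number of important edges, i.e. edges whose color is received by at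
least one of its endpoints. -/
def estar (n N r : ℕ) (c : Fin N → Fin N → Fin r) : ℕ :=
  (Finset.univ.filter (fun p : Fin N × Fin N =>
    n + 1 ≤ dX N r c (c p.1 p.2) p.1 ∨ n + 1 ≤ dY N r c (c p.1 p.2) p.2)).card

lemma exists_inj_mem {M n : ℕ} (s : Finset (Fin M)) (h : n ≤ s.card) :
    ∃ a : Fin n → Fin M, Function.Injective a ∧ ∀ i, a i ∈ s := by
  obtain ⟨t, hts, htc⟩ := Finset.exists_subset_card_eq h
  refine ⟨fun i => (t.equivFin.symm (Fin.cast htc.symm i) : Fin M), ?_,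
    fun i => hts (t.equivFin.symm (Fin.cast htc.symm i)).2⟩
  intro i j hij
  have h2 := t.equivFin.symm.injective (Subtype.ext hij)
  exact Fin.cast_injective _ h2

lemma fiber_count {α β : Type*} [Fintype α] [DecidableEq α] [DecidableEq β] [Fintype β]
    (g : α → β) (P : β → Prop) [DecidablePred P] :
    (Finset.univ.filter (fun a => P (g a))).card
      = ∑ b ∈ Finset.univ.filter P, (Finset.univ.filter (fun a => g a = b)).card := by
  rw [Finset.card_eq_sum_card_fiberwise (f := g)
    (fun a ha => Finset.mem_filter.2 ⟨Finset.mem_univ _, (Finset.mem_filter.1 ha).2⟩)]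
  refine Finset.sum_congr rfl fun b hb => ?_
  congr 1
  ext a
  simp only [Finset.mem_filter, Finset.mem_univ, true_and]
  constructor
  · exact fun h => h.2
  · intro h; exact ⟨h ▸ (Finset.mem_filter.1 hb).2, h⟩

lemma degX_sum (N r : ℕ) (c : Fin N → Fin N → Fin r) (x : Fin N) :
    ∑ i : Fin r, dX N r c i x = N := by
  have h := Finset.card_eq_sum_card_fiberwise (s := (Finset.univ : Finset (Fin N)))
    (t := (Finset.univ : Finset (Fin r))) (f := fun y => c x y)
    (fun y _ => Finset.mem_univ _)
  simpa [dX, Finset.card_univ] using h.symm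

lemma keyX (n N r : ℕ) (c : Fin N → Fin N → Fin r) (x : Fin N) :
    N + n * (Finset.univ.filter (fun j : Fin r => n + 1 ≤ dX N r c j x)).card
      ≤ (Finset.univ.filter (fun y : Fin N => n + 1 ≤ dX N r c (c x y) x)).card + r * n := by
  classical
  set R := Finset.univ.filter (fun j : Fin r => n + 1 ≤ dX N r c j x) with hR
  set Rc := Finset.univ.filter (fun j : Fin r => ¬ (n + 1 ≤ dX N r c j x)) with hRc
  have hfc : (Finset.univ.filter (fun y : Fin N => n + 1 ≤ dX N r c (c x y) x)).card
      = ∑ i ∈ R, dX N r c i x := by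
    rw [hR]
    simpa [dX] using fiber_count (fun y => c x y) (fun i => n + 1 ≤ dX N r c i x)
  have h1 : ∑ i ∈ R, dX N r c i x + ∑ i ∈ Rc, dX N r c i x = N := by
    rw [hR, hRc, Finset.sum_filter_add_sum_filter_not]
    exact degX_sum N r c x
  have h2 : ∑ i ∈ Rc, dX N r c i x ≤ Rc.card * n := by
    calc ∑ i ∈ Rc, dX N r c i x ≤ ∑ _i ∈ Rc, n :=
          Finset.sum_le_sum (fun i hi => by
            have := (Finset.mem_filter.1 hi).2
            omega)
      _ = Rc.card * n := by rw [Finset.sum_const, smul_eq_mul]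
  have h3 : R.card + Rc.card = r := by
    rw [hR, hRc, Finset.card_filter_add_card_filter_not]
    simp
  have h4 : R.card * n + Rc.card * n = r * n := by rw [← Nat.add_mul, h3]
  have h5 : n * R.card = R.card * n := Nat.mul_comm _ _
  rw [hfc]
  linarith [h1, h2, h4, h5]

lemma tX_pos (n N r : ℕ) (hN : r * n + 1 ≤ N) (c : Fin N → Fin N → Fin r) (x : Fin N) :
    1 ≤ (Finset.univ.filter (fun j : Fin r => n + 1 ≤ dX N r c j x)).card := by
  classical
  by_contra h
  push_neg at h
  have h0 : (Finset.univ.filter (fun j : Fin r => n + 1 ≤ dX N r c j x)) = ∅ :=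
    Finset.card_eq_zero.1 (by omega)
  have hall : ∀ j : Fin r, dX N r c j x ≤ n := by
    intro j
    by_contra hj
    have hmem : j ∈ Finset.univ.filter (fun j : Fin r => n + 1 ≤ dX N r c j x) :=
      Finset.mem_filter.2 ⟨Finset.mem_univ _, by omega⟩
    rw [h0] at hmem
    simp at hmem
  have hle : N ≤ r * n := by
    calc N = ∑ i : Fin r, dX N r c i x := (degX_sum N r c x).symm
      _ ≤ ∑ _i : Fin r, n := Finset.sum_le_sum (fun i _ => hall i)
      _ = r * n := by simp [Finset.sum_const, Finset.card_univ, Nat.mul_comm]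
  omega

lemma sideX (n N r : ℕ) (hN : r * n + 1 ≤ N) (c : Fin N → Fin N → Fin r) :
    N * N + n * N + n * (Finset.univ.filter (fun x : Fin N =>
        2 ≤ (Finset.univ.filter (fun j : Fin r => n + 1 ≤ dX N r c j x)).card)).card
      ≤ (∑ x : Fin N, (Finset.univ.filter (fun y : Fin N =>
          n + 1 ≤ dX N r c (c x y) x)).card) + N * (r * n) := by
  classical
  have hsum : ∑ x : Fin N, (N + n * (Finset.univ.filter
        (fun j : Fin r => n + 1 ≤ dX N r c j x)).card)
      ≤ ∑ x : Fin N, ((Finset.univ.filter (fun y : Fin N =>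
          n + 1 ≤ dX N r c (c x y) x)).card + r * n) :=
    Finset.sum_le_sum (fun x _ => keyX n N r c x)
  have hL : ∑ x : Fin N, (N + n * (Finset.univ.filter
        (fun j : Fin r => n + 1 ≤ dX N r c j x)).card)
      = N * N + n * ∑ x : Fin N, (Finset.univ.filter
        (fun j : Fin r => n + 1 ≤ dX N r c j x)).card := by
    rw [Finset.sum_add_distrib, Finset.sum_const, Finset.card_univ, ← Finset.mul_sum]
    simp [Fintype.card_fin]
  have hRr : ∑ x : Fin N, ((Finset.univ.filter (fun y : Fin N =>
          n + 1 ≤ dX N r c (c x y) x)).card + r * n)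
      = (∑ x : Fin N, (Finset.univ.filter (fun y : Fin N =>
          n + 1 ≤ dX N r c (c x y) x)).card) + N * (r * n) := by
    rw [Finset.sum_add_distrib, Finset.sum_const, Finset.card_univ]
    simp [Fintype.card_fin]
  have hb : ∀ x ∈ (Finset.univ : Finset (Fin N)),
      (1 + if 2 ≤ (Finset.univ.filter (fun j : Fin r => n + 1 ≤ dX N r c j x)).card
        then 1 else 0)
      ≤ (Finset.univ.filter (fun j : Fin r => n + 1 ≤ dX N r c j x)).card := by
    intro x _
    have h1x := tX_pos n N r hN c x
    split <;> omega
  have hcount : ∑ x : Fin N, ((1 : ℕ) + if 2 ≤ (Finset.univ.filter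
        (fun j : Fin r => n + 1 ≤ dX N r c j x)).card then 1 else 0)
      = N + (Finset.univ.filter (fun x : Fin N =>
        2 ≤ (Finset.univ.filter (fun j : Fin r => n + 1 ≤ dX N r c j x)).card)).card := by
    rw [Finset.sum_add_distrib, Finset.sum_const, Finset.card_univ, Fintype.card_fin,
      smul_eq_mul, mul_one]
    congr 1
    exact (Finset.card_filter _ _).symm
  have hT : N + (Finset.univ.filter (fun x : Fin N =>
        2 ≤ (Finset.univ.filter (fun j : Fin r => n + 1 ≤ dX N r c j x)).card)).card
      ≤ ∑ x : Fin N, (Finset.univ.filter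
        (fun j : Fin r => n + 1 ≤ dX N r c j x)).card :=
    hcount ▸ Finset.sum_le_sum hb
  have hmul := Nat.mul_le_mul_left n hT
  rw [Nat.mul_add] at hmul
  rw [hL, hRr] at hsum
  linarith [hsum, hmul]

lemma zsumX (n N r : ℕ) (c : Fin N → Fin N → Fin r) :
    ∑ i ∈ Finset.Icc 2 r, (Finset.univ.filter (fun x : Fin N =>
        (Finset.univ.filter (fun j : Fin r => n + 1 ≤ dX N r c j x)).card = i)).card
      = (Finset.univ.filter (fun x : Fin N =>
        2 ≤ (Finset.univ.filter (fun j : Fin r => n + 1 ≤ dX N r c j x)).card)).card := by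
  classical
  set tX : Fin N → ℕ :=
    fun x => (Finset.univ.filter (fun j : Fin r => n + 1 ≤ dX N r c j x)).card with htX
  have h := Finset.card_eq_sum_card_fiberwise
    (s := Finset.univ.filter (fun x : Fin N => 2 ≤ tX x))
    (t := Finset.Icc 2 r) (f := tX)
    (fun x hx => Finset.mem_Icc.2 ⟨(Finset.mem_filter.1 hx).2,
      le_trans (Finset.card_filter_le _ _) (by simp)⟩)
  rw [h]
  refine Finset.sum_congr rfl fun i hi => ?_
  congr 1
  ext x
  simp only [htX, Finset.filter_filter, Finset.mem_filter, Finset.mem_univ, true_and]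
  have h2i : 2 ≤ i := (Finset.mem_Icc.1 hi).1
  omega

lemma no_double (n N r : ℕ) (c : Fin N → Fin N → Fin r)
    (hno : ¬ BipHasMonoDoubleStar N r n n c) (u v : Fin N) :
    ¬ (n + 1 ≤ dX N r c (c u v) u ∧ n + 1 ≤ dY N r c (c u v) v) := by
  classical
  rintro ⟨hu, hv⟩
  apply hno
  have hvmem : v ∈ Finset.univ.filter (fun y => c u y = c u v) := by simp
  have humem : u ∈ Finset.univ.filter (fun x => c x v = c u v) := by simp
  have hA : n ≤ ((Finset.univ.filter (fun y => c u y = c u v)).erase v).card := by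
    rw [Finset.card_erase_of_mem hvmem]
    have : n + 1 ≤ (Finset.univ.filter (fun y => c u y = c u v)).card := hu
    omega
  have hB : n ≤ ((Finset.univ.filter (fun x => c x v = c u v)).erase u).card := by
    rw [Finset.card_erase_of_mem humem]
    have : n + 1 ≤ (Finset.univ.filter (fun x => c x v = c u v)).card := hv
    omega
  obtain ⟨a, hainj, hamem⟩ := exists_inj_mem _ hA
  obtain ⟨b, hbinj, hbmem⟩ := exists_inj_mem _ hB
  refine ⟨u, v, a, b, c u v, hainj, hbinj, ?_, ?_, rfl, ?_, ?_⟩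
  · exact fun i => Finset.ne_of_mem_erase (hamem i)
  · exact fun j => Finset.ne_of_mem_erase (hbmem j)
  · intro i
    have := Finset.mem_of_mem_erase (hamem i)
    simpa using this
  · intro j
    have := Finset.mem_of_mem_erase (hbmem j)
    simpa using this

lemma prod_count (N : ℕ) (P : Fin N → Fin N → Prop) [∀ x y, Decidable (P x y)] :
    (Finset.univ.filter (fun p : Fin N × Fin N => P p.1 p.2)).card
      = ∑ x : Fin N, (Finset.univ.filter (fun y => P x y)).card := by
  rw [Finset.card_filter, Fintype.sum_prod_type]
  exact Finset.sum_congr rfl fun x _ => (Finset.card_filter _ _).symm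

lemma prod_count' (N : ℕ) (P : Fin N → Fin N → Prop) [∀ x y, Decidable (P x y)] :
    (Finset.univ.filter (fun p : Fin N × Fin N => P p.1 p.2)).card
      = ∑ y : Fin N, (Finset.univ.filter (fun x => P x y)).card := by
  rw [Finset.card_filter, Fintype.sum_prod_type_right]
  exact Finset.sum_congr rfl fun y _ => (Finset.card_filter _ _).symm


/-- Claim on doubly-colored vertices: `n ∑_{i=2}^{r} z_i ≤ 2(r-1)nN - 2N² + e*`. -/
theorem stmt14 (r n N : ℕ) (hr : 2 ≤ r) (hn : 1 ≤ n) (hN : r * n + 1 ≤ N)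
    (c : Fin N → Fin N → Fin r) (hno : ¬ BipHasMonoDoubleStar N r n n c) :
    (n : ℤ) * ∑ i ∈ Finset.Icc 2 r, (zcount n N r c i : ℤ) ≤
      2 * ((r : ℤ) - 1) * n * N - 2 * (N : ℤ)^2 + estar n N r c := by
  classical
  have hdXY : ∀ (i : Fin r) (y : Fin N), dX N r (Function.swap c) i y = dY N r c i y :=
    fun i y => rfl
  have hswap : ∀ x y : Fin N, Function.swap c x y = c y x := fun _ _ => rfl
  -- side inequalities
  have hXside := sideX n N r hN c
  have hYside := sideX n N r hN (Function.swap c)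
  simp only [hdXY, hswap] at hYside
  -- estar decomposition
  have hdisj : Disjoint
      (Finset.univ.filter (fun p : Fin N × Fin N => n + 1 ≤ dX N r c (c p.1 p.2) p.1))
      (Finset.univ.filter (fun p : Fin N × Fin N => n + 1 ≤ dY N r c (c p.1 p.2) p.2)) :=
    Finset.disjoint_filter.2 (fun p _ hp hq => no_double n N r c hno p.1 p.2 ⟨hp, hq⟩)
  have hestar : estar n N r c
      = (Finset.univ.filter (fun p : Fin N × Fin N =>
          n + 1 ≤ dX N r c (c p.1 p.2) p.1)).card
        + (Finset.univ.filter (fun p : Fin N × Fin N =>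
          n + 1 ≤ dY N r c (c p.1 p.2) p.2)).card := by
    rw [estar, Finset.filter_or, Finset.card_union_of_disjoint hdisj]
  have hA : (Finset.univ.filter (fun p : Fin N × Fin N =>
        n + 1 ≤ dX N r c (c p.1 p.2) p.1)).card
      = ∑ x : Fin N, (Finset.univ.filter (fun y : Fin N =>
          n + 1 ≤ dX N r c (c x y) x)).card :=
    prod_count N (fun x y => n + 1 ≤ dX N r c (c x y) x)
  have hB : (Finset.univ.filter (fun p : Fin N × Fin N =>
        n + 1 ≤ dY N r c (c p.1 p.2) p.2)).card
      = ∑ y : Fin N, (Finset.univ.filter (fun x : Fin N =>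
          n + 1 ≤ dY N r c (c x y) y)).card :=
    prod_count' N (fun x y => n + 1 ≤ dY N r c (c x y) y)
  -- zcount sum
  have hzY := zsumX n N r (Function.swap c)
  simp only [hdXY] at hzY
  have hz : ∑ i ∈ Finset.Icc 2 r, zcount n N r c i
      = (Finset.univ.filter (fun x : Fin N =>
          2 ≤ (Finset.univ.filter (fun j : Fin r => n + 1 ≤ dX N r c j x)).card)).card
        + (Finset.univ.filter (fun y : Fin N =>
          2 ≤ (Finset.univ.filter (fun j : Fin r => n + 1 ≤ dY N r c j y)).card)).card := by
    unfold zcount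
    rw [Finset.sum_add_distrib, zsumX n N r c, hzY]
  -- assemble over ℕ
  set SX := (Finset.univ.filter (fun x : Fin N =>
      2 ≤ (Finset.univ.filter (fun j : Fin r => n + 1 ≤ dX N r c j x)).card)).card with hSX
  set SY := (Finset.univ.filter (fun y : Fin N =>
      2 ≤ (Finset.univ.filter (fun j : Fin r => n + 1 ≤ dY N r c j y)).card)).card with hSY
  have hkey : 2 * (N * N) + 2 * (n * N) + n * SX + n * SY
      ≤ estar n N r c + 2 * (N * (r * n)) := by
    rw [hestar, hA, hB]
    linarith [hXside, hYside]
  -- cast to ℤ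
  have hz' : ∑ i ∈ Finset.Icc 2 r, (zcount n N r c i : ℤ) = (SX : ℤ) + SY := by
    rw [← Nat.cast_sum, hz]
    push_cast
    ring
  rw [hz']
  have hkeyZ : 2 * ((N : ℤ) * N) + 2 * ((n : ℤ) * N) + (n : ℤ) * SX + (n : ℤ) * SY
      ≤ (estar n N r c : ℤ) + 2 * ((N : ℤ) * ((r : ℤ) * n)) := by exact_mod_cast hkey
  nlinarith [hkeyZ]
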